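/- Let α > 1/2, β ∈ ℝ, and let w_j := max_{1 ≤ i ≤ j} i^α·(log(i+1))^β for j ≥ 1 (so that w is nondecreasing). Then there exist constants c, C > 0 such that for all sufficiently large n, c·n^{−(α−1/2)}·(log(n+1))^{−β} ≤ σ_n(U(ℓ_∞(w))) ≤ C·n^{−(α−1/2)}·(log(n+1))^{−β}, where U(ℓ_∞(w)) := {x ∈ ℓ₂ : sup_{j≥1} |w_j x_j| ≤ 1}. -/

import Mathlib

open scoped BigOperators

/-- The `ℓ₂` norm of a real sequence. -/
noncomputable def l2norm (x : ℕ → ℝ) : ℝ := Real.sqrt (∑' j, (x j) ^ 2)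

/-- The error of best `n`-term approximation of `x` in `ℓ₂`:
the infimum of `‖x - S‖_{ℓ₂}` over all sequences `S` supported on at most `n` indices. -/
noncomputable def sigman (n : ℕ) (x : ℕ → ℝ) : ℝ :=
  sInf {e : ℝ | ∃ S : ℕ → ℝ, (Function.support S).Finite ∧
    (Function.support S).ncard ≤ n ∧ e = l2norm (fun j => x j - S j)}

/-- `xs` is the decreasing rearrangement of the absolute values of the entries of `x`:
it is nonincreasing and is obtained by rearranging `(|x j|)` via a bijection of the indices. -/
def IsDecRearrangement (x xs : ℕ → ℝ) : Prop :=
  Antitone xs ∧ ∃ e : ℕ ≃ ℕ, ∀ j, xs j = |x (e j)|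

/-- The nondecreasing weights `w_j = max_{1 ≤ i ≤ j} i^α (log (i+1))^β` (indexed from `0`,
so index `j` corresponds to the `(j+1)`-st weight). -/
noncomputable def walpha (α β : ℝ) (j : ℕ) : ℝ :=
  Finset.sup' (Finset.range (j + 1)) (Finset.nonempty_range_iff.mpr (Nat.succ_ne_zero j))
    (fun i => ((i : ℝ) + 1) ^ α * Real.log ((i : ℝ) + 2) ^ β)

/-- `σ_n(U(ℓ_∞(w)))`: the supremum of best `n`-term approximation errors over the unit
ball `U(ℓ_∞(w)) = {x ∈ ℓ₂ : sup_j |w_j x_j| ≤ 1}`. -/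
noncomputable def sigmanUinf (w : ℕ → ℝ) (n : ℕ) : ℝ :=
  sSup {e : ℝ | ∃ x : ℕ → ℝ, Summable (fun j => (x j) ^ 2) ∧
    (∀ j, |w j * x j| ≤ 1) ∧ e = sigman n x}

open Finset

noncomputable def fab (α β : ℝ) (i : ℕ) : ℝ := ((i : ℝ) + 1) ^ α * Real.log ((i : ℝ) + 2) ^ β

lemma log_i2_pos (i : ℕ) : 0 < Real.log ((i : ℝ) + 2) := by
  apply Real.log_pos; nlinarith [Nat.cast_nonneg (α := ℝ) i]

lemma fab_pos (α β : ℝ) (i : ℕ) : 0 < fab α β i :=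
  mul_pos (Real.rpow_pos_of_pos (by positivity) _) (Real.rpow_pos_of_pos (log_i2_pos i) _)

lemma fab_le_walpha (α β : ℝ) (j : ℕ) : fab α β j ≤ walpha α β j :=
  Finset.le_sup' _ (Finset.self_mem_range_succ j)

lemma walpha_pos (α β : ℝ) (j : ℕ) : 0 < walpha α β j :=
  lt_of_lt_of_le (fab_pos α β j) (fab_le_walpha α β j)

lemma walpha_mono (α β : ℝ) : Monotone (walpha α β) := by
  intro a b hab
  apply Finset.sup'_le
  intro i hi
  exact Finset.le_sup' (f := fab α β)
    (Finset.mem_range.mpr (lt_of_lt_of_le (Finset.mem_range.mp hi) (by omega)))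

lemma walpha_le_quasi (α β : ℝ) {C : ℝ} (h : ∀ i j : ℕ, i ≤ j → fab α β i ≤ C * fab α β j)
    (j : ℕ) : walpha α β j ≤ C * fab α β j := by
  apply Finset.sup'_le
  intro i hi
  exact h i j (Nat.lt_succ_iff.mp (Finset.mem_range.mp hi))

lemma log_rpow_le' {t θ u : ℝ} (ht : 0 ≤ t) (hθ : 0 < θ) (hu : 1 ≤ u) :
    Real.log u ^ t ≤ θ⁻¹ ^ t * u ^ (θ * t) := by
  have hu0 : 0 < u := by linarith
  have h1 : Real.log u ≤ θ⁻¹ * u ^ θ := by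
    have : Real.log u = θ⁻¹ * Real.log (u ^ θ) := by
      rw [Real.log_rpow hu0]; field_simp
    rw [this]
    have := Real.log_le_sub_one_of_pos (Real.rpow_pos_of_pos hu0 θ)
    have h2 : Real.log (u ^ θ) ≤ u ^ θ := by linarith
    exact mul_le_mul_of_nonneg_left h2 (by positivity)
  calc Real.log u ^ t ≤ (θ⁻¹ * u ^ θ) ^ t :=
        Real.rpow_le_rpow (Real.log_nonneg hu) h1 ht
    _ = θ⁻¹ ^ t * u ^ (θ * t) := by
        rw [Real.mul_rpow (by positivity) (by positivity), ← Real.rpow_mul (le_of_lt hu0)]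

lemma fab_quasi_mono (α β : ℝ) (hα : 0 < α) :
    ∃ C : ℝ, 0 < C ∧ ∀ i j : ℕ, i ≤ j → fab α β i ≤ C * fab α β j := by
  rcases le_or_gt 0 β with hβ | hβ
  · refine ⟨1, one_pos, fun i j hij => ?_⟩
    rw [one_mul]
    have hij' : ((i:ℝ)) ≤ (j:ℝ) := by exact_mod_cast hij
    unfold fab
    apply mul_le_mul
    · exact Real.rpow_le_rpow (by positivity) (by linarith) hα.le
    · exact Real.rpow_le_rpow (Real.log_nonneg (by nlinarith [Nat.cast_nonneg (α := ℝ) i]))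
        (Real.log_le_log (by positivity) (by linarith)) hβ
    · exact Real.rpow_nonneg (log_i2_pos i).le _
    · positivity
  · set t := -β with ht
    have htpos : 0 < t := by simp [ht]; linarith
    set θ := α / (4 * t) with hθdef
    have hθ : 0 < θ := by positivity
    set C1 := ((1:ℝ)/2) ^ β with hC1
    set C2 := Real.log 2 ^ β * (θ⁻¹ ^ t * (2:ℝ) ^ (3/4*α)) with hC2
    have hC1pos : 0 < C1 := Real.rpow_pos_of_pos (by norm_num) _
    have hC2pos : 0 < C2 :=
      mul_pos (Real.rpow_pos_of_pos (Real.log_pos (by norm_num)) _)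
        (mul_pos (Real.rpow_pos_of_pos (by positivity) _) (Real.rpow_pos_of_pos (by norm_num) _))
    refine ⟨max C1 C2, lt_max_of_lt_left hC1pos, fun i j hij => ?_⟩
    have hij' : ((i:ℝ)) ≤ (j:ℝ) := by exact_mod_cast hij
    have hipos : (0:ℝ) ≤ (i:ℝ) := Nat.cast_nonneg i
    have hjpos : (0:ℝ) ≤ (j:ℝ) := Nat.cast_nonneg j
    have hfabj : 0 < fab α β j :=
      mul_pos (Real.rpow_pos_of_pos (by positivity) _) (Real.rpow_pos_of_pos (log_i2_pos j) _)
    rcases le_or_gt ((j:ℝ) + 2) (((i:ℝ) + 2)^2) with hcase | hcase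
    · -- big i: log(i+2) ≥ (1/2) log(j+2)
      have hlog : (1/2) * Real.log ((j:ℝ)+2) ≤ Real.log ((i:ℝ)+2) := by
        have h1 : Real.log ((j:ℝ)+2) ≤ Real.log (((i:ℝ)+2)^2) :=
          Real.log_le_log (by linarith) hcase
        rw [Real.log_pow] at h1
        push_cast at h1
        linarith
      have hlogpos : 0 < (1/2) * Real.log ((j:ℝ)+2) := by
        have := log_i2_pos j; linarith
      have h2 : Real.log ((i:ℝ)+2) ^ β ≤ ((1/2) * Real.log ((j:ℝ)+2)) ^ β :=
        Real.rpow_le_rpow_of_nonpos hlogpos hlog hβ.le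
      have h3 : ((1/2) * Real.log ((j:ℝ)+2)) ^ β = C1 * Real.log ((j:ℝ)+2) ^ β := by
        rw [Real.mul_rpow (by norm_num) (log_i2_pos j).le]
      calc fab α β i ≤ ((j:ℝ)+1) ^ α * (C1 * Real.log ((j:ℝ)+2) ^ β) := by
            rw [← h3]
            exact mul_le_mul (Real.rpow_le_rpow (by positivity) (by linarith) hα.le) h2
              (Real.rpow_nonneg (log_i2_pos i).le _) (by positivity)
        _ = C1 * fab α β j := by unfold fab; ring
        _ ≤ max C1 C2 * fab α β j :=
            mul_le_mul_of_nonneg_right (le_max_left _ _) hfabj.le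
    · -- small i: (i+2)^2 < j+2
      have hsq : (((i:ℝ)+2)) ^ (2:ℝ) ≤ (j:ℝ)+2 := by
        rw [show ((2:ℝ)) = ((2:ℕ):ℝ) by norm_num, Real.rpow_natCast]
        exact hcase.le
      have hi2 : ((i:ℝ)+2) ≤ ((j:ℝ)+2) ^ ((1:ℝ)/2) := by
        have h := Real.rpow_le_rpow (by positivity) hsq (by norm_num : (0:ℝ) ≤ 1/2)
        rwa [← Real.rpow_mul (by positivity), show (2:ℝ) * (1/2) = 1 by norm_num,
          Real.rpow_one] at h
      -- fab i ≤ log2^β * (j+2)^(α/2)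
      have hstep1 : fab α β i ≤ Real.log 2 ^ β * ((j:ℝ)+2) ^ (α/2) := by
        have hl : Real.log ((i:ℝ)+2) ^ β ≤ Real.log 2 ^ β :=
          Real.rpow_le_rpow_of_nonpos (Real.log_pos (by norm_num))
            (Real.log_le_log (by norm_num) (by linarith)) hβ.le
        have hp : ((i:ℝ)+1) ^ α ≤ ((j:ℝ)+2) ^ (α/2) := by
          calc ((i:ℝ)+1) ^ α ≤ ((i:ℝ)+2) ^ α := Real.rpow_le_rpow (by positivity) (by linarith) hα.le
            _ ≤ (((j:ℝ)+2) ^ ((1:ℝ)/2)) ^ α := Real.rpow_le_rpow (by positivity) hi2 hα.le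
            _ = ((j:ℝ)+2) ^ (α/2) := by
                rw [← Real.rpow_mul (by positivity)]; ring_nf
        calc fab α β i = ((i:ℝ)+1) ^ α * Real.log ((i:ℝ)+2) ^ β := rfl
          _ ≤ ((j:ℝ)+2) ^ (α/2) * Real.log 2 ^ β := by
              exact mul_le_mul hp hl (Real.rpow_nonneg (log_i2_pos i).le _) (by positivity)
          _ = Real.log 2 ^ β * ((j:ℝ)+2) ^ (α/2) := by ring
      -- (j+2)^(α/2) * log(j+2)^t ≤ θ⁻¹^t * 2^(3/4*α) * (j+1)^α
      have hstep2 : ((j:ℝ)+2) ^ (α/2) * Real.log ((j:ℝ)+2) ^ t ≤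
          θ⁻¹ ^ t * (2:ℝ) ^ (3/4*α) * ((j:ℝ)+1) ^ α := by
        have hlog := log_rpow_le' htpos.le hθ (show (1:ℝ) ≤ (j:ℝ)+2 by linarith)
        have hθt : θ * t = α/4 := by rw [hθdef, div_mul_eq_mul_div, div_eq_iff (by positivity)]; ring
        rw [hθt] at hlog
        have h4 : ((j:ℝ)+2) ^ (α/2) * Real.log ((j:ℝ)+2) ^ t ≤
            θ⁻¹ ^ t * (((j:ℝ)+2) ^ (α/2) * ((j:ℝ)+2) ^ (α/4)) := by
          calc ((j:ℝ)+2) ^ (α/2) * Real.log ((j:ℝ)+2) ^ t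
              ≤ ((j:ℝ)+2) ^ (α/2) * (θ⁻¹ ^ t * ((j:ℝ)+2) ^ (α/4)) :=
                mul_le_mul_of_nonneg_left hlog (by positivity)
            _ = θ⁻¹ ^ t * (((j:ℝ)+2) ^ (α/2) * ((j:ℝ)+2) ^ (α/4)) := by ring
        have h5 : ((j:ℝ)+2) ^ (α/2) * ((j:ℝ)+2) ^ (α/4) = ((j:ℝ)+2) ^ (3/4*α) := by
          rw [← Real.rpow_add (by positivity)]; ring_nf
        have h6 : ((j:ℝ)+2) ^ (3/4*α) ≤ (2:ℝ) ^ (3/4*α) * ((j:ℝ)+1) ^ α := by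
          calc ((j:ℝ)+2) ^ (3/4*α) ≤ ((2:ℝ)*((j:ℝ)+1)) ^ (3/4*α) :=
                Real.rpow_le_rpow (by positivity) (by linarith) (by positivity)
            _ = (2:ℝ) ^ (3/4*α) * ((j:ℝ)+1) ^ (3/4*α) :=
                Real.mul_rpow (by norm_num) (by positivity)
            _ ≤ (2:ℝ) ^ (3/4*α) * ((j:ℝ)+1) ^ α := by
                apply mul_le_mul_of_nonneg_left _ (by positivity)
                exact Real.rpow_le_rpow_of_exponent_le (by linarith) (by linarith)
        calc ((j:ℝ)+2) ^ (α/2) * Real.log ((j:ℝ)+2) ^ t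
            ≤ θ⁻¹ ^ t * ((j:ℝ)+2) ^ (3/4*α) := by rw [← h5]; exact h4
          _ ≤ θ⁻¹ ^ t * ((2:ℝ) ^ (3/4*α) * ((j:ℝ)+1) ^ α) :=
              mul_le_mul_of_nonneg_left h6 (by positivity)
          _ = θ⁻¹ ^ t * (2:ℝ) ^ (3/4*α) * ((j:ℝ)+1) ^ α := by ring
      -- combine
      have hLt : (0:ℝ) < Real.log ((j:ℝ)+2) ^ t := Real.rpow_pos_of_pos (log_i2_pos j) _
      have hβt : Real.log ((j:ℝ)+2) ^ β = (Real.log ((j:ℝ)+2) ^ t)⁻¹ := by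
        rw [ht, Real.rpow_neg (log_i2_pos j).le, inv_inv]
      have hstep3 : ((j:ℝ)+2) ^ (α/2) ≤ (θ⁻¹ ^ t * (2:ℝ) ^ (3/4*α)) * fab α β j := by
        rw [show fab α β j = ((j:ℝ)+1) ^ α * Real.log ((j:ℝ)+2) ^ β from rfl, hβt]
        rw [show θ⁻¹ ^ t * (2:ℝ) ^ (3/4*α) * (((j:ℝ)+1) ^ α * (Real.log ((j:ℝ)+2) ^ t)⁻¹)
          = (θ⁻¹ ^ t * (2:ℝ) ^ (3/4*α) * ((j:ℝ)+1) ^ α) / (Real.log ((j:ℝ)+2) ^ t) by ring,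
          le_div_iff₀ hLt]
        exact hstep2
      calc fab α β i ≤ Real.log 2 ^ β * ((j:ℝ)+2) ^ (α/2) := hstep1
        _ ≤ Real.log 2 ^ β * ((θ⁻¹ ^ t * (2:ℝ) ^ (3/4*α)) * fab α β j) :=
            mul_le_mul_of_nonneg_left hstep3 (Real.rpow_nonneg (Real.log_nonneg (by norm_num)) _)
        _ = C2 * fab α β j := by rw [hC2]; ring
        _ ≤ max C1 C2 * fab α β j :=
            mul_le_mul_of_nonneg_right (le_max_right _ _) hfabj.le




open Finset in
-- MVT step
lemma rpow_tail_step {s : ℝ} (hs : 1 < s) {x : ℝ} (hx : 1 ≤ x) :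
    (s - 1) * (x + 1) ^ (-s) ≤ x ^ (1 - s) - (x + 1) ^ (1 - s) := by
  have hx0 : 0 < x := by linarith
  have hcont : ContinuousOn (fun y : ℝ => y ^ (1 - s)) (Set.Icc x (x + 1)) := by
    apply ContinuousOn.rpow_const continuousOn_id
    intro y hy
    refine Or.inl ?_
    rcases hy with ⟨h1, _⟩
    intro h
    simp only [id_eq] at h
    rw [h] at h1; linarith
  have hderiv : ∀ y ∈ Set.Ioo x (x + 1),
      HasDerivAt (fun y : ℝ => y ^ (1 - s)) ((1 - s) * y ^ (1 - s - 1)) y := by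
    intro y hy
    exact Real.hasDerivAt_rpow_const (Or.inl (by rcases hy with ⟨h1, _⟩; intro h; rw [h] at h1; linarith))
  obtain ⟨c, hc, hceq⟩ := exists_hasDerivAt_eq_slope (fun y : ℝ => y ^ (1 - s))
    (fun y => (1 - s) * y ^ (1 - s - 1)) (by linarith) hcont hderiv
  have hc0 : 0 < c := lt_trans hx0 hc.1
  have hslope : (1 - s) * c ^ (-s) = (x + 1) ^ (1 - s) - x ^ (1 - s) := by
    have h2 : (1:ℝ) - s - 1 = -s := by ring
    rw [← h2]
    simpa using hceq
  have hmono : (x + 1) ^ (-s) ≤ c ^ (-s) :=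
    Real.rpow_le_rpow_of_nonpos hc0 hc.2.le (by linarith)
  nlinarith [hmono, hslope]

open Finset in
-- telescoping tail bound
lemma sum_tail_rpow {s : ℝ} (hs : 1 < s) (n : ℕ) (hn : 1 ≤ n) (m : ℕ) :
    ∑ i ∈ range m, (((n : ℝ) + i) + 1) ^ (-s) ≤ (n : ℝ) ^ (1 - s) / (s - 1) := by
  have hs1 : 0 < s - 1 := by linarith
  set g : ℕ → ℝ := fun k => ((n : ℝ) + k) ^ (1 - s) with hg
  have key : ∀ i ∈ range m, (((n : ℝ) + i) + 1) ^ (-s) ≤ (g i - g (i+1)) / (s - 1) := by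
    intro i _
    have hx : (1:ℝ) ≤ (n : ℝ) + i := by
      have h1 : (1:ℝ) ≤ (n:ℝ) := by exact_mod_cast hn
      have h2 : (0:ℝ) ≤ (i:ℝ) := Nat.cast_nonneg i
      linarith
    have hstep := rpow_tail_step hs hx
    rw [le_div_iff₀ hs1]
    have hcast : g (i+1) = ((n:ℝ) + i + 1) ^ (1 - s) := by rw [hg]; push_cast; ring_nf
    rw [hcast]
    calc ((n : ℝ) + i + 1) ^ (-s) * (s - 1) = (s - 1) * ((n : ℝ) + i + 1) ^ (-s) := by ring
      _ ≤ ((n:ℝ) + i) ^ (1 - s) - ((n:ℝ) + i + 1) ^ (1 - s) := hstep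
  calc ∑ i ∈ range m, (((n : ℝ) + i) + 1) ^ (-s)
      ≤ ∑ i ∈ range m, ((g i - g (i+1)) / (s - 1)) := Finset.sum_le_sum key
    _ = (g 0 - g m) / (s-1) := by rw [← Finset.sum_div, Finset.sum_range_sub' g m]
    _ ≤ (n : ℝ) ^ (1 - s) / (s - 1) := by
        have hms : (0:ℝ) ≤ g m := Real.rpow_nonneg (by positivity) _
        have h0 : g 0 = (n:ℝ) ^ (1 - s) := by rw [hg]; norm_num
        rw [h0]
        gcongr
        linarith

lemma rpow_inv_sq {x : ℝ} (hx : 0 < x) (a : ℝ) : ((x ^ a)⁻¹)^2 = x ^ (-(2*a)) := by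
  rw [← Real.rpow_neg hx.le, ← Real.rpow_natCast (x ^ (-a)) 2, ← Real.rpow_mul hx.le]
  norm_num
  ring_nf

lemma inv_fab_sq (α β : ℝ) (j : ℕ) :
    ((fab α β j)⁻¹)^2 = ((j:ℝ)+1) ^ (-(2*α)) * Real.log ((j:ℝ)+2) ^ (-(2*β)) := by
  unfold fab
  rw [mul_inv, mul_pow, rpow_inv_sq (by positivity) α, rpow_inv_sq (log_i2_pos j) β]

lemma add_rpow_le {a b t : ℝ} (ha : 0 ≤ a) (hb : 0 ≤ b) (ht : 0 ≤ t) :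
    (a + b) ^ t ≤ 2 ^ t * (a ^ t + b ^ t) := by
  have h2 : (0:ℝ) ≤ 2 ^ t := Real.rpow_nonneg (by norm_num) t
  rcases le_total a b with h | h
  · calc (a+b)^t ≤ (2*b)^t := Real.rpow_le_rpow (by linarith) (by linarith) ht
      _ = 2^t * b^t := Real.mul_rpow (by norm_num) hb
      _ ≤ 2^t * (a^t + b^t) := by
          have := Real.rpow_nonneg ha t
          nlinarith
  · calc (a+b)^t ≤ (2*a)^t := Real.rpow_le_rpow (by linarith) (by linarith) ht
      _ = 2^t * a^t := Real.mul_rpow (by norm_num) ha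
      _ ≤ 2^t * (a^t + b^t) := by
          have := Real.rpow_nonneg hb t
          nlinarith


lemma one_le_log_n1 {n : ℕ} (hn : 2 ≤ n) : 1 ≤ Real.log ((n:ℝ)+1) := by
  rw [Real.le_log_iff_exp_le (by positivity)]
  have h1 : Real.exp 1 ≤ 3 := (Real.exp_one_lt_d9.le).trans (by norm_num)
  have : (3:ℝ) ≤ (n:ℝ)+1 := by
    have : (2:ℝ) ≤ (n:ℝ) := by exact_mod_cast hn
    linarith
  linarith

lemma fab_tail_sum (α β : ℝ) (hα : 1/2 < α) :
    ∃ C2 : ℝ, 0 < C2 ∧ ∀ n : ℕ, 2 ≤ n → ∀ m : ℕ,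
      ∑ i ∈ range m, ((fab α β (n+i))⁻¹)^2 ≤
        C2 * (n:ℝ) ^ (1-2*α) * Real.log ((n:ℝ)+1) ^ (-(2*β)) := by
  have h2α : (1:ℝ) < 2*α := by linarith
  have h2α1 : (0:ℝ) < 2*α-1 := by linarith
  rcases le_or_gt 0 β with hβ | hβ
  · -- easy case β ≥ 0
    refine ⟨(2*α-1)⁻¹, inv_pos.mpr h2α1, fun n hn m => ?_⟩
    have hn1 : (1:ℝ) ≤ (n:ℝ) := by exact_mod_cast (by omega : 1 ≤ n)
    have hlogn : 0 < Real.log ((n:ℝ)+1) := by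
      have := one_le_log_n1 hn; linarith
    have key : ∀ i ∈ range m, ((fab α β (n+i))⁻¹)^2 ≤
        Real.log ((n:ℝ)+1) ^ (-(2*β)) * (((n:ℝ)+i)+1) ^ (-(2*α)) := by
      intro i _
      rw [inv_fab_sq]
      push_cast
      have hl : Real.log ((n:ℝ)+(i:ℝ)+2) ^ (-(2*β)) ≤ Real.log ((n:ℝ)+1) ^ (-(2*β)) := by
        apply Real.rpow_le_rpow_of_nonpos hlogn
        · apply Real.log_le_log (by positivity)
          have : (0:ℝ) ≤ (i:ℝ) := Nat.cast_nonneg i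
          linarith
        · linarith
      calc ((n:ℝ)+(i:ℝ)+1) ^ (-(2*α)) * Real.log ((n:ℝ)+(i:ℝ)+2) ^ (-(2*β))
          ≤ ((n:ℝ)+(i:ℝ)+1) ^ (-(2*α)) * Real.log ((n:ℝ)+1) ^ (-(2*β)) :=
            mul_le_mul_of_nonneg_left hl (Real.rpow_nonneg (by positivity) _)
        _ = Real.log ((n:ℝ)+1) ^ (-(2*β)) * (((n:ℝ)+(i:ℝ))+1) ^ (-(2*α)) := by ring_nf
    calc ∑ i ∈ range m, ((fab α β (n+i))⁻¹)^2
        ≤ ∑ i ∈ range m, Real.log ((n:ℝ)+1) ^ (-(2*β)) * (((n:ℝ)+i)+1) ^ (-(2*α)) :=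
          Finset.sum_le_sum key
      _ = Real.log ((n:ℝ)+1) ^ (-(2*β)) * ∑ i ∈ range m, (((n:ℝ)+i)+1) ^ (-(2*α)) := by
          rw [Finset.mul_sum]
      _ ≤ Real.log ((n:ℝ)+1) ^ (-(2*β)) * ((n:ℝ) ^ (1-2*α) / (2*α-1)) := by
          apply mul_le_mul_of_nonneg_left _ (Real.rpow_nonneg hlogn.le _)
          exact sum_tail_rpow h2α n (by omega) m
      _ = (2*α-1)⁻¹ * (n:ℝ) ^ (1-2*α) * Real.log ((n:ℝ)+1) ^ (-(2*β)) := by ring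
  · -- hard case β < 0
    set t := -(2*β) with htdef
    have htpos : 0 < t := by simp [htdef]; linarith
    set ε := (2*α-1)/2 with hεdef
    have hεpos : 0 < ε := by rw [hεdef]; linarith
    set θ := ε / t with hθdef
    have hθpos : 0 < θ := by positivity
    set K := 2 ^ t * (θ⁻¹ ^ t * 2 ^ ε) with hKdef
    have hKpos : 0 < K := by positivity
    refine ⟨2 ^ t * (2*α-1)⁻¹ + K * ε⁻¹,
      add_pos (mul_pos (Real.rpow_pos_of_pos two_pos t) (inv_pos.mpr h2α1))
        (mul_pos hKpos (inv_pos.mpr hεpos)), fun n hn m => ?_⟩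
    have hn1 : (1:ℝ) ≤ (n:ℝ) := by exact_mod_cast (by omega : 1 ≤ n)
    have hnpos : (0:ℝ) < (n:ℝ) := by linarith
    have hlogn1 : 1 ≤ Real.log ((n:ℝ)+1) := one_le_log_n1 hn
    have hlogn : 0 < Real.log ((n:ℝ)+1) := by linarith
    -- pointwise bound
    have key : ∀ i ∈ range m, ((fab α β (n+i))⁻¹)^2 ≤
        2 ^ t * Real.log ((n:ℝ)+1) ^ t * (((n:ℝ)+i)+1) ^ (-(2*α))
        + K * ((n:ℝ)+1) ^ (-ε) * (((n:ℝ)+i)+1) ^ (-(2*α-ε)) := by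
      intro i _
      rw [inv_fab_sq]
      push_cast
      have hi0 : (0:ℝ) ≤ (i:ℝ) := Nat.cast_nonneg i
      have hA : (0:ℝ) < (n:ℝ)+(i:ℝ)+1 := by linarith
      have hApow : (0:ℝ) ≤ ((n:ℝ)+(i:ℝ)+1) ^ (-(2*α)) := Real.rpow_nonneg hA.le _
      have hu1 : (1:ℝ) ≤ ((n:ℝ)+(i:ℝ)+2) / ((n:ℝ)+1) := by
        rw [le_div_iff₀ (by linarith)]
        linarith
      have hsplit : Real.log ((n:ℝ)+(i:ℝ)+2) =
          Real.log ((n:ℝ)+1) + Real.log (((n:ℝ)+(i:ℝ)+2) / ((n:ℝ)+1)) := by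
        rw [← Real.log_mul (by positivity) (by positivity)]
        congr 1
        field_simp
      have hlogsum : Real.log ((n:ℝ)+(i:ℝ)+2) ^ t ≤
          2 ^ t * (Real.log ((n:ℝ)+1) ^ t + Real.log (((n:ℝ)+(i:ℝ)+2) / ((n:ℝ)+1)) ^ t) := by
        rw [hsplit]
        exact add_rpow_le hlogn.le (Real.log_nonneg hu1) htpos.le
      have hlogu : Real.log (((n:ℝ)+(i:ℝ)+2) / ((n:ℝ)+1)) ^ t ≤
          θ⁻¹ ^ t * (((n:ℝ)+(i:ℝ)+2) / ((n:ℝ)+1)) ^ ε := by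
        have h := log_rpow_le' htpos.le hθpos hu1
        rwa [show θ * t = ε by rw [hθdef]; field_simp] at h
      have hquot : (((n:ℝ)+(i:ℝ)+2) / ((n:ℝ)+1)) ^ ε ≤
          2 ^ ε * ((n:ℝ)+1) ^ (-ε) * ((n:ℝ)+(i:ℝ)+1) ^ ε := by
        rw [Real.div_rpow (by linarith) (by linarith)]
        have hnum : ((n:ℝ)+(i:ℝ)+2) ^ ε ≤ 2 ^ ε * ((n:ℝ)+(i:ℝ)+1) ^ ε := by
          rw [← Real.mul_rpow (by norm_num) hA.le]
          exact Real.rpow_le_rpow (by linarith) (by linarith) hεpos.le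
        rw [div_eq_mul_inv, ← Real.rpow_neg (by linarith : (0:ℝ) ≤ (n:ℝ)+1)]
        calc ((n:ℝ)+(i:ℝ)+2) ^ ε * ((n:ℝ)+1) ^ (-ε)
            ≤ (2 ^ ε * ((n:ℝ)+(i:ℝ)+1) ^ ε) * ((n:ℝ)+1) ^ (-ε) :=
              mul_le_mul_of_nonneg_right hnum (Real.rpow_nonneg (by linarith) _)
          _ = 2 ^ ε * ((n:ℝ)+1) ^ (-ε) * ((n:ℝ)+(i:ℝ)+1) ^ ε := by ring
      -- combine the estimates for the log part
      have hmain : Real.log ((n:ℝ)+(i:ℝ)+2) ^ t ≤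
          2 ^ t * Real.log ((n:ℝ)+1) ^ t
          + K * ((n:ℝ)+1) ^ (-ε) * ((n:ℝ)+(i:ℝ)+1) ^ ε := by
        have h2t : (0:ℝ) ≤ 2 ^ t := Real.rpow_nonneg (by norm_num) _
        have hθt : (0:ℝ) ≤ θ⁻¹ ^ t := Real.rpow_nonneg (by positivity) _
        have step : Real.log (((n:ℝ)+(i:ℝ)+2) / ((n:ℝ)+1)) ^ t ≤
            θ⁻¹ ^ t * (2 ^ ε * ((n:ℝ)+1) ^ (-ε) * ((n:ℝ)+(i:ℝ)+1) ^ ε) :=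
          hlogu.trans (mul_le_mul_of_nonneg_left hquot hθt)
        calc Real.log ((n:ℝ)+(i:ℝ)+2) ^ t
            ≤ 2 ^ t * (Real.log ((n:ℝ)+1) ^ t + Real.log (((n:ℝ)+(i:ℝ)+2) / ((n:ℝ)+1)) ^ t) :=
              hlogsum
          _ ≤ 2 ^ t * (Real.log ((n:ℝ)+1) ^ t
                + θ⁻¹ ^ t * (2 ^ ε * ((n:ℝ)+1) ^ (-ε) * ((n:ℝ)+(i:ℝ)+1) ^ ε)) := by
              apply mul_le_mul_of_nonneg_left _ h2t
              linarith [step]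
          _ = 2 ^ t * Real.log ((n:ℝ)+1) ^ t
                + K * ((n:ℝ)+1) ^ (-ε) * ((n:ℝ)+(i:ℝ)+1) ^ ε := by
              rw [hKdef]; ring
      -- multiply by A_i
      have hεcomb : ((n:ℝ)+(i:ℝ)+1) ^ (-(2*α)) * ((n:ℝ)+(i:ℝ)+1) ^ ε =
          ((n:ℝ)+(i:ℝ)+1) ^ (-(2*α-ε)) := by
        rw [← Real.rpow_add hA]
        ring_nf
      calc ((n:ℝ)+(i:ℝ)+1) ^ (-(2*α)) * Real.log ((n:ℝ)+(i:ℝ)+2) ^ t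
          ≤ ((n:ℝ)+(i:ℝ)+1) ^ (-(2*α)) * (2 ^ t * Real.log ((n:ℝ)+1) ^ t
              + K * ((n:ℝ)+1) ^ (-ε) * ((n:ℝ)+(i:ℝ)+1) ^ ε) :=
            mul_le_mul_of_nonneg_left hmain hApow
        _ = 2 ^ t * Real.log ((n:ℝ)+1) ^ t * ((n:ℝ)+(i:ℝ)+1) ^ (-(2*α))
              + K * ((n:ℝ)+1) ^ (-ε)
                * (((n:ℝ)+(i:ℝ)+1) ^ (-(2*α)) * ((n:ℝ)+(i:ℝ)+1) ^ ε) := by ring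
        _ = 2 ^ t * Real.log ((n:ℝ)+1) ^ t * (((n:ℝ)+(i:ℝ))+1) ^ (-(2*α))
              + K * ((n:ℝ)+1) ^ (-ε) * (((n:ℝ)+(i:ℝ))+1) ^ (-(2*α-ε)) := by
            rw [hεcomb]
    -- sum it up
    have hs2 : (1:ℝ) < 2*α-ε := by rw [hεdef]; linarith
    have hsum1 := sum_tail_rpow h2α n (by omega) m
    have hsum2 := sum_tail_rpow hs2 n (by omega) m
    have hsplitsum : ∑ i ∈ range m, ((fab α β (n+i))⁻¹)^2 ≤
        2 ^ t * Real.log ((n:ℝ)+1) ^ t * ∑ i ∈ range m, (((n:ℝ)+i)+1) ^ (-(2*α))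
        + K * ((n:ℝ)+1) ^ (-ε) * ∑ i ∈ range m, (((n:ℝ)+i)+1) ^ (-(2*α-ε)) := by
      rw [Finset.mul_sum, Finset.mul_sum, ← Finset.sum_add_distrib]
      exact Finset.sum_le_sum key
    have hS1 : 2 ^ t * Real.log ((n:ℝ)+1) ^ t * ∑ i ∈ range m, (((n:ℝ)+i)+1) ^ (-(2*α)) ≤
        2 ^ t * (2*α-1)⁻¹ * (n:ℝ) ^ (1-2*α) * Real.log ((n:ℝ)+1) ^ t := by
      have h1 : (0:ℝ) ≤ 2 ^ t * Real.log ((n:ℝ)+1) ^ t := by positivity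
      calc 2 ^ t * Real.log ((n:ℝ)+1) ^ t * ∑ i ∈ range m, (((n:ℝ)+i)+1) ^ (-(2*α))
          ≤ 2 ^ t * Real.log ((n:ℝ)+1) ^ t * ((n:ℝ) ^ (1-2*α) / (2*α-1)) :=
            mul_le_mul_of_nonneg_left hsum1 h1
        _ = 2 ^ t * (2*α-1)⁻¹ * (n:ℝ) ^ (1-2*α) * Real.log ((n:ℝ)+1) ^ t := by ring
    have hS2 : K * ((n:ℝ)+1) ^ (-ε) * ∑ i ∈ range m, (((n:ℝ)+i)+1) ^ (-(2*α-ε)) ≤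
        K * ε⁻¹ * (n:ℝ) ^ (1-2*α) * Real.log ((n:ℝ)+1) ^ t := by
      have h1 : (0:ℝ) ≤ K * ((n:ℝ)+1) ^ (-ε) := by positivity
      have hstep : K * ((n:ℝ)+1) ^ (-ε) * ∑ i ∈ range m, (((n:ℝ)+i)+1) ^ (-(2*α-ε)) ≤
          K * ((n:ℝ)+1) ^ (-ε) * ((n:ℝ) ^ (1-(2*α-ε)) / (2*α-ε-1)) :=
        mul_le_mul_of_nonneg_left hsum2 h1
      have hεeq : 2*α-ε-1 = ε := by rw [hεdef]; ring
      have hmon : ((n:ℝ)+1) ^ (-ε) ≤ (n:ℝ) ^ (-ε) :=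
        Real.rpow_le_rpow_of_nonpos hnpos (by linarith) (by linarith)
      have hcomb : (n:ℝ) ^ (-ε) * (n:ℝ) ^ (1-(2*α-ε)) = (n:ℝ) ^ (1-2*α) := by
        rw [← Real.rpow_add hnpos]
        ring_nf
      have hlogt : 1 ≤ Real.log ((n:ℝ)+1) ^ t := by
        have h := Real.rpow_le_rpow (by norm_num) hlogn1 htpos.le
        rwa [Real.one_rpow] at h
      have hx : (0:ℝ) ≤ (n:ℝ) ^ (1-(2*α-ε)) := Real.rpow_nonneg hnpos.le _
      calc K * ((n:ℝ)+1) ^ (-ε) * ∑ i ∈ range m, (((n:ℝ)+i)+1) ^ (-(2*α-ε))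
          ≤ K * ((n:ℝ)+1) ^ (-ε) * ((n:ℝ) ^ (1-(2*α-ε)) / (2*α-ε-1)) := hstep
        _ = K * ε⁻¹ * (((n:ℝ)+1) ^ (-ε) * (n:ℝ) ^ (1-(2*α-ε))) := by rw [hεeq]; ring
        _ ≤ K * ε⁻¹ * ((n:ℝ) ^ (-ε) * (n:ℝ) ^ (1-(2*α-ε))) := by
            apply mul_le_mul_of_nonneg_left _ (by positivity)
            exact mul_le_mul_of_nonneg_right hmon hx
        _ = K * ε⁻¹ * (n:ℝ) ^ (1-2*α) := by rw [hcomb]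
        _ ≤ K * ε⁻¹ * (n:ℝ) ^ (1-2*α) * Real.log ((n:ℝ)+1) ^ t := by
            nth_rewrite 1 [← mul_one (K * ε⁻¹ * (n:ℝ) ^ (1-2*α))]
            apply mul_le_mul_of_nonneg_left hlogt (by positivity)
    calc ∑ i ∈ range m, ((fab α β (n+i))⁻¹)^2
        ≤ 2 ^ t * Real.log ((n:ℝ)+1) ^ t * ∑ i ∈ range m, (((n:ℝ)+i)+1) ^ (-(2*α))
          + K * ((n:ℝ)+1) ^ (-ε) * ∑ i ∈ range m, (((n:ℝ)+i)+1) ^ (-(2*α-ε)) := hsplitsum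
      _ ≤ 2 ^ t * (2*α-1)⁻¹ * (n:ℝ) ^ (1-2*α) * Real.log ((n:ℝ)+1) ^ t
          + K * ε⁻¹ * (n:ℝ) ^ (1-2*α) * Real.log ((n:ℝ)+1) ^ t := add_le_add hS1 hS2
      _ = (2 ^ t * (2*α-1)⁻¹ + K * ε⁻¹) * (n:ℝ) ^ (1-2*α) * Real.log ((n:ℝ)+1) ^ (-(2*β)) := by
          rw [htdef]; ring


lemma sigman_nonneg (n : ℕ) (x : ℕ → ℝ) : 0 ≤ sigman n x := by
  apply Real.sInf_nonneg
  rintro e ⟨S, _, _, rfl⟩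
  exact Real.sqrt_nonneg _

lemma sigman_bddBelow (n : ℕ) (x : ℕ → ℝ) :
    BddBelow {e : ℝ | ∃ S : ℕ → ℝ, (Function.support S).Finite ∧
      (Function.support S).ncard ≤ n ∧ e = l2norm (fun j => x j - S j)} := by
  refine ⟨0, ?_⟩
  rintro e ⟨S, _, _, rfl⟩
  exact Real.sqrt_nonneg _

lemma sigman_set_nonempty (n : ℕ) (x : ℕ → ℝ) :
    (Set.Nonempty {e : ℝ | ∃ S : ℕ → ℝ, (Function.support S).Finite ∧
      (Function.support S).ncard ≤ n ∧ e = l2norm (fun j => x j - S j)}) := by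
  refine ⟨l2norm x, ⟨0, ?_, ?_, ?_⟩⟩
  · simp [Function.support_zero]
  · simp [Function.support_zero]
  · simp only [Pi.zero_apply, sub_zero]

lemma sigman_le_l2norm (n : ℕ) (x : ℕ → ℝ) : sigman n x ≤ l2norm x := by
  apply csInf_le (sigman_bddBelow n x)
  refine ⟨0, ?_, ?_, ?_⟩
  · simp [Function.support_zero]
  · simp [Function.support_zero]
  · simp only [Pi.zero_apply, sub_zero]

theorem sigmanUinf_alg_log_weights (α β : ℝ) (hα : 1 / 2 < α) :
    ∃ c C : ℝ, ∃ N : ℕ, 0 < c ∧ 0 < C ∧ ∀ n : ℕ, N ≤ n →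
      c * (n : ℝ) ^ (-(α - 1 / 2)) * Real.log ((n : ℝ) + 1) ^ (-β) ≤
          sigmanUinf (walpha α β) n ∧
        sigmanUinf (walpha α β) n ≤
          C * (n : ℝ) ^ (-(α - 1 / 2)) * Real.log ((n : ℝ) + 1) ^ (-β) := by
  obtain ⟨CA, hCApos, hquasi⟩ := fab_quasi_mono α β (by linarith)
  obtain ⟨C2, hC2pos, htail⟩ := fab_tail_sum α β hα
  set W := walpha α β with hWdef
  have hWpos : ∀ j, 0 < W j := walpha_pos α β
  have hfW : ∀ j, ((W j)⁻¹)^2 ≤ ((fab α β j)⁻¹)^2 := by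
    intro j
    apply pow_le_pow_left₀ (inv_nonneg.mpr (hWpos j).le)
    exact inv_anti₀ (fab_pos α β j) (fab_le_walpha α β j)
  -- summability of inverse weights squared
  have hsW : Summable (fun j => ((W j)⁻¹)^2) := by
    have hb := htail 2 le_rfl
    apply summable_of_sum_range_le
      (c := ((W 0)⁻¹)^2 + ((W 1)⁻¹)^2 + C2 * (2:ℝ)^(1-2*α) * Real.log ((2:ℝ)+1)^(-(2*β)))
      (fun j => by positivity)
    intro m
    have hmono : ∑ j ∈ range m, ((W j)⁻¹)^2 ≤ ∑ j ∈ range (2+m), ((W j)⁻¹)^2 :=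
      Finset.sum_le_sum_of_subset_of_nonneg (Finset.range_subset_range.mpr (by omega))
        (fun i _ _ => by positivity)
    refine hmono.trans ?_
    rw [Finset.sum_range_add]
    have h2 : ∑ i ∈ range m, ((W (2+i))⁻¹)^2 ≤ C2 * (2:ℝ)^(1-2*α) * Real.log ((2:ℝ)+1)^(-(2*β)) := by
      refine le_trans (Finset.sum_le_sum (fun i _ => hfW (2+i))) ?_
      have := hb m
      norm_num at this ⊢
      exact this
    have h1 : ∑ j ∈ range 2, ((W j)⁻¹)^2 = ((W 0)⁻¹)^2 + ((W 1)⁻¹)^2 := by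
      simp [Finset.sum_range_succ]
    rw [h1]
    linarith
  -- members of the ball have pointwise bound
  have hball_sq : ∀ x : ℕ → ℝ, (∀ j, |W j * x j| ≤ 1) → ∀ j, (x j)^2 ≤ ((W j)⁻¹)^2 := by
    intro x hx j
    have h1 : |x j| ≤ (W j)⁻¹ := by
      have h2 := hx j
      rw [abs_mul, abs_of_pos (hWpos j)] at h2
      rw [← mul_le_mul_iff_right₀ (hWpos j), mul_inv_cancel₀ (hWpos j).ne']
      exact h2
    calc (x j)^2 = |x j|^2 := (sq_abs _).symm
      _ ≤ ((W j)⁻¹)^2 := pow_le_pow_left₀ (abs_nonneg _) h1 2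
  -- the candidate sup set is bounded above
  set M : ℝ := Real.sqrt (∑' j, ((W j)⁻¹)^2) with hMdef
  have hBdd : ∀ n : ℕ, BddAbove {e : ℝ | ∃ x : ℕ → ℝ, Summable (fun j => (x j) ^ 2) ∧
      (∀ j, |W j * x j| ≤ 1) ∧ e = sigman n x} := by
    intro n
    refine ⟨M, ?_⟩
    rintro e ⟨x, hxs, hxb, rfl⟩
    refine (sigman_le_l2norm n x).trans ?_
    apply Real.sqrt_le_sqrt
    exact Summable.tsum_le_tsum (fun j => hball_sq x hxb j) hxs hsW
  refine ⟨CA⁻¹ * (4:ℝ)^(-α) * min 1 ((2:ℝ)^(-β)), Real.sqrt C2, 2,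
    by positivity, Real.sqrt_pos.mpr hC2pos, fun n hn => ?_⟩
  have hn1 : 1 ≤ n := by omega
  have hnR : (1:ℝ) ≤ (n:ℝ) := by exact_mod_cast hn1
  have hnpos : (0:ℝ) < (n:ℝ) := by linarith
  have hlog1 : 1 ≤ Real.log ((n:ℝ)+1) := one_le_log_n1 hn
  have hlogpos : 0 < Real.log ((n:ℝ)+1) := by linarith
  constructor
  · -- LOWER BOUND
    set x₀ : ℕ → ℝ := fun j => (W j)⁻¹ with hx₀def
    have hx₀nonneg : ∀ j, 0 ≤ x₀ j := fun j => inv_nonneg.mpr (hWpos j).le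
    have hx₀mem : sigman n x₀ ∈ {e : ℝ | ∃ x : ℕ → ℝ, Summable (fun j => (x j) ^ 2) ∧
        (∀ j, |W j * x j| ≤ 1) ∧ e = sigman n x} := by
      refine ⟨x₀, hsW, fun j => ?_, rfl⟩
      rw [hx₀def]
      rw [mul_inv_cancel₀ (hWpos j).ne', abs_one]
    have hle := le_csSup (hBdd n) hx₀mem
    refine le_trans ?_ hle
    -- lower bound for sigman n x₀
    have hlb : Real.sqrt ((n:ℝ) * (x₀ (3*n))^2) ≤ sigman n x₀ := by
      apply le_csInf (sigman_set_nonempty n x₀)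
      rintro e ⟨S, hSfin, hScard, rfl⟩
      set T := (Finset.Ico n (3*n)).filter (fun j => S j = 0) with hTdef
      have hT' : (Finset.Ico n (3*n)).filter (fun j => ¬ S j = 0) ⊆ hSfin.toFinset := by
        intro j hj
        rw [Set.Finite.mem_toFinset]
        exact (Finset.mem_filter.mp hj).2
      have hTcard : n ≤ T.card := by
        have h1 := Finset.card_filter_add_card_filter_not
          (s := Finset.Ico n (3*n)) (p := fun j => S j = 0)
        have h2 : ((Finset.Ico n (3*n)).filter (fun j => ¬ S j = 0)).card ≤ n := by
          refine le_trans (Finset.card_le_card hT') ?_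
          rw [← Set.ncard_eq_toFinset_card _ hSfin]
          exact hScard
        have h3 : (Finset.Ico n (3*n)).card = 2*n := by rw [Nat.card_Ico]; omega
        rw [← hTdef] at h1
        omega
      have hterm : ∀ j ∈ T, (x₀ (3*n))^2 ≤ (x₀ j - S j)^2 := by
        intro j hj
        rcases Finset.mem_filter.mp hj with ⟨hj1, hj2⟩
        rw [hj2, sub_zero]
        have hmono : x₀ (3*n) ≤ x₀ j :=
          inv_anti₀ (hWpos j) (walpha_mono α β (le_of_lt (Finset.mem_Ico.mp hj1).2))
        exact pow_le_pow_left₀ (hx₀nonneg (3*n)) hmono 2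
      have hsummable' : Summable (fun j => (x₀ j - S j)^2) := by
        have heq : (fun j => (x₀ j - S j)^2) =
            fun j => (x₀ j)^2 + ((x₀ j - S j)^2 - (x₀ j)^2) := by funext j; ring
        rw [heq]
        apply Summable.add hsW
        apply summable_of_ne_finset_zero (s := hSfin.toFinset)
        intro j hj
        rw [Set.Finite.mem_toFinset] at hj
        have hS0 : S j = 0 := Function.notMem_support.mp hj
        rw [hS0]; ring
      have hsum_T : (T.card : ℝ) * (x₀ (3*n))^2 ≤ ∑ j ∈ T, (x₀ j - S j)^2 := by
        have h := Finset.card_nsmul_le_sum T _ _ hterm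
        rwa [nsmul_eq_mul] at h
      have hsum_tsum : ∑ j ∈ T, (x₀ j - S j)^2 ≤ ∑' j, (x₀ j - S j)^2 :=
        Summable.sum_le_tsum T (fun j _ => sq_nonneg _) hsummable'
      have hfin2 : (n:ℝ) * (x₀ (3*n))^2 ≤ ∑' j, (x₀ j - S j)^2 := by
        have hcast : (n:ℝ) ≤ (T.card:ℝ) := by exact_mod_cast hTcard
        nlinarith [sq_nonneg (x₀ (3*n))]
      exact Real.sqrt_le_sqrt hfin2
    refine le_trans ?_ hlb
    -- final numeric computation
    have hsqrt : Real.sqrt ((n:ℝ) * (x₀ (3*n))^2) = Real.sqrt (n:ℝ) * x₀ (3*n) := by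
      rw [Real.sqrt_mul hnpos.le, Real.sqrt_sq (hx₀nonneg _)]
    rw [hsqrt]
    -- bound x₀ (3n) from below
    have hx3n : (CA * fab α β (3*n))⁻¹ ≤ x₀ (3*n) := by
      apply inv_anti₀ (hWpos _)
      exact walpha_le_quasi α β hquasi (3*n)
    have hfab_pos := fab_pos α β (3*n)
    have hx3n_expand : (CA * fab α β (3*n))⁻¹ =
        CA⁻¹ * ((3*(n:ℝ))+1)^(-α) * Real.log ((3*(n:ℝ))+2)^(-β) := by
      unfold fab
      push_cast
      rw [mul_inv, mul_inv]
      rw [← Real.rpow_neg (by positivity), ← Real.rpow_neg (Real.log_nonneg (by nlinarith))]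
      ring
    have h1 : (4:ℝ)^(-α) * (n:ℝ)^(-α) ≤ ((3*(n:ℝ))+1)^(-α) := by
      rw [← Real.mul_rpow (by norm_num) hnpos.le]
      apply Real.rpow_le_rpow_of_nonpos (by positivity) (by linarith) (by linarith)
    have h2 : min 1 ((2:ℝ)^(-β)) * Real.log ((n:ℝ)+1)^(-β) ≤ Real.log ((3*(n:ℝ))+2)^(-β) := by
      have hlog3pos : 0 < Real.log (3*(n:ℝ)+2) := Real.log_pos (by linarith)
      rcases le_or_gt β 0 with hβ | hβ
      · have hstep : Real.log ((n:ℝ)+1)^(-β) ≤ Real.log (3*(n:ℝ)+2)^(-β) :=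
          Real.rpow_le_rpow hlogpos.le (Real.log_le_log (by linarith) (by linarith)) (by linarith)
        calc min 1 ((2:ℝ)^(-β)) * Real.log ((n:ℝ)+1)^(-β)
            ≤ 1 * Real.log ((n:ℝ)+1)^(-β) :=
              mul_le_mul_of_nonneg_right (min_le_left _ _) (Real.rpow_nonneg hlogpos.le _)
          _ = Real.log ((n:ℝ)+1)^(-β) := one_mul _
          _ ≤ Real.log (3*(n:ℝ)+2)^(-β) := hstep
      · have hlog2 : Real.log (3*(n:ℝ)+2) ≤ 2 * Real.log ((n:ℝ)+1) := by
          have hn2R : (2:ℝ) ≤ (n:ℝ) := by exact_mod_cast hn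
          have hsq : 3*(n:ℝ)+2 ≤ ((n:ℝ)+1)^2 := by nlinarith
          have h := Real.log_le_log (by linarith) hsq
          rwa [Real.log_pow, Nat.cast_ofNat] at h
        have hstep : (2 * Real.log ((n:ℝ)+1))^(-β) ≤ Real.log (3*(n:ℝ)+2)^(-β) :=
          Real.rpow_le_rpow_of_nonpos hlog3pos hlog2 (by linarith)
        have hmul : (2 * Real.log ((n:ℝ)+1))^(-β) =
            (2:ℝ)^(-β) * Real.log ((n:ℝ)+1)^(-β) := Real.mul_rpow (by norm_num) hlogpos.le
        calc min 1 ((2:ℝ)^(-β)) * Real.log ((n:ℝ)+1)^(-β)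
            ≤ (2:ℝ)^(-β) * Real.log ((n:ℝ)+1)^(-β) :=
              mul_le_mul_of_nonneg_right (min_le_right _ _) (Real.rpow_nonneg hlogpos.le _)
          _ = (2 * Real.log ((n:ℝ)+1))^(-β) := hmul.symm
          _ ≤ Real.log (3*(n:ℝ)+2)^(-β) := hstep
    have hsqrtn : Real.sqrt (n:ℝ) = (n:ℝ)^((1:ℝ)/2) := Real.sqrt_eq_rpow _
    have hnn : (n:ℝ)^((1:ℝ)/2) * (n:ℝ)^(-α) = (n:ℝ)^(-(α-1/2)) := by
      rw [← Real.rpow_add hnpos]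
      congr 1
      ring
    have hmin_nonneg : (0:ℝ) ≤ min 1 ((2:ℝ)^(-β)) := le_min (by norm_num) (by positivity)
    calc CA⁻¹ * (4:ℝ)^(-α) * min 1 ((2:ℝ)^(-β)) * (n:ℝ)^(-(α-1/2)) * Real.log ((n:ℝ)+1)^(-β)
        = ((n:ℝ)^((1:ℝ)/2)) * (CA⁻¹ * ((4:ℝ)^(-α) * (n:ℝ)^(-α)) *
            (min 1 ((2:ℝ)^(-β)) * Real.log ((n:ℝ)+1)^(-β))) := by
          rw [← hnn]; ring
      _ ≤ ((n:ℝ)^((1:ℝ)/2)) * (CA⁻¹ * ((3*(n:ℝ))+1)^(-α) * Real.log ((3*(n:ℝ))+2)^(-β)) := by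
          apply mul_le_mul_of_nonneg_left _ (Real.rpow_nonneg hnpos.le _)
          apply mul_le_mul
          · exact mul_le_mul_of_nonneg_left h1 (by positivity)
          · exact h2
          · exact mul_nonneg hmin_nonneg (Real.rpow_nonneg hlogpos.le _)
          · positivity
      _ = Real.sqrt (n:ℝ) * (CA * fab α β (3*n))⁻¹ := by
          rw [hsqrtn, hx3n_expand]
      _ ≤ Real.sqrt (n:ℝ) * x₀ (3*n) :=
          mul_le_mul_of_nonneg_left hx3n (Real.sqrt_nonneg _)
  · -- UPPER BOUND
    apply Real.sSup_le
    · rintro e ⟨x, hxs, hxb, rfl⟩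
      -- truncation
      set S : ℕ → ℝ := fun j => if j < n then x j else 0 with hSdef
      have hsupp : Function.support S ⊆ ↑(Finset.range n) := by
        intro j hj
        simp only [Function.mem_support, hSdef] at hj
        by_contra hc
        simp only [Finset.coe_range, Set.mem_Iio] at hc
        exact hj (if_neg (by omega))
      have hfin : (Function.support S).Finite :=
        Set.Finite.subset (Finset.range n).finite_toSet hsupp
      have hcard : (Function.support S).ncard ≤ n := by
        have := Set.ncard_le_ncard hsupp (Finset.range n).finite_toSet
        rwa [Set.ncard_coe_finset, Finset.card_range] at this
      have hmem : l2norm (fun j => x j - S j) ∈ {e : ℝ | ∃ S : ℕ → ℝ,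
          (Function.support S).Finite ∧ (Function.support S).ncard ≤ n ∧
          e = l2norm (fun j => x j - S j)} := ⟨S, hfin, hcard, rfl⟩
      refine (csInf_le (sigman_bddBelow n x) hmem).trans ?_
      -- estimate the tail
      set g : ℕ → ℝ := fun j => (x j - S j)^2 with hgdef
      have hg_eq : ∀ j, g j = (if j < n then 0 else x j)^2 := by
        intro j
        simp only [hgdef, hSdef]
        by_cases h : j < n <;> simp [h]
      have hg_nonneg : ∀ j, 0 ≤ g j := fun j => sq_nonneg _
      have hg_le : ∀ j, g j ≤ (x j)^2 := by
        intro j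
        rw [hg_eq]
        by_cases h : j < n
        · simp [h, sq_nonneg]
        · simp [h]
      have hgs : Summable g := Summable.of_nonneg_of_le hg_nonneg hg_le hxs
      have htsum_bound : ∑' j, g j ≤ C2 * (n:ℝ)^(1-2*α) * Real.log ((n:ℝ)+1)^(-(2*β)) := by
        rw [← Summable.sum_add_tsum_nat_add n hgs]
        have hz : ∑ j ∈ range n, g j = 0 := by
          apply Finset.sum_eq_zero
          intro j hj
          rw [hg_eq, if_pos (Finset.mem_range.mp hj)]
          norm_num
        rw [hz, zero_add]
        apply Real.tsum_le_of_sum_range_le (fun i => hg_nonneg _)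
        intro m
        refine le_trans (Finset.sum_le_sum (fun i _ => ?_)) (htail n hn m)
        rw [hg_eq, if_neg (by omega)]
        calc (x (i+n))^2 ≤ ((W (i+n))⁻¹)^2 := hball_sq x hxb _
          _ ≤ ((fab α β (i+n))⁻¹)^2 := hfW _
          _ = ((fab α β (n+i))⁻¹)^2 := by rw [Nat.add_comm]
      -- take square roots
      have hQ : l2norm (fun j => x j - S j) ≤
          Real.sqrt (C2 * (n:ℝ)^(1-2*α) * Real.log ((n:ℝ)+1)^(-(2*β))) :=
        Real.sqrt_le_sqrt htsum_bound
      refine hQ.trans ?_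
      have hsplit : Real.sqrt (C2 * (n:ℝ)^(1-2*α) * Real.log ((n:ℝ)+1)^(-(2*β))) =
          Real.sqrt C2 * (n:ℝ)^(-(α-1/2)) * Real.log ((n:ℝ)+1)^(-β) := by
        rw [Real.sqrt_mul (by positivity), Real.sqrt_mul hC2pos.le]
        congr 1
        · congr 1
          rw [Real.sqrt_eq_rpow, ← Real.rpow_mul hnpos.le]
          congr 1
          ring
        · rw [Real.sqrt_eq_rpow, ← Real.rpow_mul hlogpos.le]
          congr 1
          ring
      rw [hsplit]
    · positivity
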